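/- Let G=(V,E,w) be a similarity ground-truth input and consider the recursive pivot algorithm: pick a vertex p ∈ V; let w_1 > w_2 > … > w_k be the distinct weights of edges incident to p and set B_i = {v : w(p,v) = w_i}; recursively apply the algorithm to each induced subgraph G[B_i] to obtain trees T_1,…,T_k; let T*_0 be the single-vertex tree on p and, for 1 ≤ i ≤ k, let T*_i be the tree whose root has children the roots of T*_{i−1} and T_i; output T*_k. Then the output tree is a generating tree for G, and hence has optimal cost for every admissible objective function. The key structural fact is: for all u ∈ B_i and v ∈ B_j with i < j, w(u,v) = w(p,v) = w_j. -/

import Mathlib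

open scoped BigOperators

attribute [local instance] Classical.propDecidable

noncomputable section

/-! ### Cluster trees -/

/-- A (binary, rooted) hierarchical-clustering tree whose leaves are labelled by
vertices of `V`. -/
inductive ClusterTree (V : Type) : Type where
  | leaf : V → ClusterTree V
  | node : ClusterTree V → ClusterTree V → ClusterTree V

namespace ClusterTree

variable {V : Type}

/-- The list of leaf labels of the tree (left-to-right). -/
def leavesList : ClusterTree V → List V
  | leaf v => [v]
  | node L R => leavesList L ++ leavesList R

/-- The set of leaf labels of the tree. -/
def leaves [DecidableEq V] (T : ClusterTree V) : Finset V :=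
  T.leavesList.toFinset

end ClusterTree

section Defs

variable {V : Type}

/-- `T` is a cluster tree for the whole (finite) vertex set `V`: its leaves are
pairwise distinct and exhaust the vertices. -/
def IsClusterTree [DecidableEq V] [Fintype V] (T : ClusterTree V) : Prop :=
  T.leavesList.Nodup ∧ T.leaves = Finset.univ

/-- `IsSubtreeOf s T` : `s` occurs as a rooted subtree of `T`. -/
def IsSubtreeOf : ClusterTree V → ClusterTree V → Prop
  | s, ClusterTree.leaf v => s = ClusterTree.leaf v
  | s, ClusterTree.node L R => s = ClusterTree.node L R ∨ IsSubtreeOf s L ∨ IsSubtreeOf s R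

/-- The subtree of `T` rooted at the lowest common ancestor of the leaves `x` and `y`. -/
def lcaSubtree [DecidableEq V] : ClusterTree V → V → V → ClusterTree V
  | ClusterTree.leaf v, _, _ => ClusterTree.leaf v
  | ClusterTree.node L R, x, y =>
    if x ∈ L.leaves ∧ y ∈ L.leaves then lcaSubtree L x y
    else if x ∈ R.leaves ∧ y ∈ R.leaves then lcaSubtree R x y
    else ClusterTree.node L R

/-- `w(A, B) = ∑_{a ∈ A, b ∈ B} w a b`. -/
def cutWeight (w : V → V → ℝ) (A B : Finset V) : ℝ := ∑ a ∈ A, ∑ b ∈ B, w a b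

/-- `w(A) = ∑_{a, b ∈ A} w a b` (ordered pairs; each edge counted twice). -/
def innerWeight (w : V → V → ℝ) (A : Finset V) : ℝ := ∑ a ∈ A, ∑ b ∈ A, w a b

/-- `∑_{e ∈ E} w(e)`, for a symmetric weight function with zero diagonal. -/
def totalWeight [Fintype V] (w : V → V → ℝ) : ℝ := (∑ u : V, ∑ v : V, w u v) / 2

/-- Cost of a cluster tree: each internal node `N` with children `N₁, N₂`
contributes `w(V(N₁), V(N₂)) · g(|V(N₁)|, |V(N₂)|)`. -/
def treeCost [DecidableEq V] (w : V → V → ℝ) (g : ℕ → ℕ → ℝ) : ClusterTree V → ℝ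
  | ClusterTree.leaf _ => 0
  | ClusterTree.node L R =>
      cutWeight w L.leaves R.leaves * g L.leaves.card R.leaves.card
        + treeCost w g L + treeCost w g R

/-- Dasgupta's cost (= `treeCost` with `g (a, b) = a + b`). -/
def dasguptaCost [DecidableEq V] (w : V → V → ℝ) : ClusterTree V → ℝ
  | ClusterTree.leaf _ => 0
  | ClusterTree.node L R =>
      ((L.leaves.card + R.leaves.card : ℕ) : ℝ) * cutWeight w L.leaves R.leaves
        + dasguptaCost w L + dasguptaCost w R

/-! ### Generating trees -/

/-- `T` is a generating tree for the similarity graph `w` : there is a nonnegative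
weight function on the internal nodes, non-increasing from leaves towards the root,
realizing every edge weight at the corresponding LCA. -/
def IsGenerating [DecidableEq V] (w : V → V → ℝ) (T : ClusterTree V) : Prop :=
  ∃ W : ClusterTree V → ℝ,
    (∀ s, IsSubtreeOf s T → 0 ≤ W s) ∧
    (∀ L R, IsSubtreeOf (ClusterTree.node L R) T →
      ∀ s, IsSubtreeOf s L ∨ IsSubtreeOf s R → W (ClusterTree.node L R) ≤ W s) ∧
    (∀ x y, x ∈ T.leaves → y ∈ T.leaves → x ≠ y → w x y = W (lcaSubtree T x y))

/-- Generating tree in the dissimilarity setting (weights non-decreasing from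
leaves towards the root). -/
def IsGeneratingDissim [DecidableEq V] (w : V → V → ℝ) (T : ClusterTree V) : Prop :=
  ∃ W : ClusterTree V → ℝ,
    (∀ s, IsSubtreeOf s T → 0 ≤ W s) ∧
    (∀ L R, IsSubtreeOf (ClusterTree.node L R) T →
      ∀ s, IsSubtreeOf s L ∨ IsSubtreeOf s R → W s ≤ W (ClusterTree.node L R)) ∧
    (∀ x y, x ∈ T.leaves → y ∈ T.leaves → x ≠ y → w x y = W (lcaSubtree T x y))

/-- Strictly generating tree (similarity setting). -/
def IsStrictlyGenerating [DecidableEq V] (w : V → V → ℝ) (T : ClusterTree V) : Prop :=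
  ∃ W : ClusterTree V → ℝ,
    (∀ s, IsSubtreeOf s T → 0 ≤ W s) ∧
    (∀ L R, IsSubtreeOf (ClusterTree.node L R) T →
      ∀ s, IsSubtreeOf s L ∨ IsSubtreeOf s R → W (ClusterTree.node L R) < W s) ∧
    (∀ x y, x ∈ T.leaves → y ∈ T.leaves → x ≠ y → w x y = W (lcaSubtree T x y))

/-- Strictly generating tree (dissimilarity setting). -/
def IsStrictlyGeneratingDissim [DecidableEq V] (w : V → V → ℝ) (T : ClusterTree V) : Prop :=
  ∃ W : ClusterTree V → ℝ,
    (∀ s, IsSubtreeOf s T → 0 ≤ W s) ∧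
    (∀ L R, IsSubtreeOf (ClusterTree.node L R) T →
      ∀ s, IsSubtreeOf s L ∨ IsSubtreeOf s R → W s < W (ClusterTree.node L R)) ∧
    (∀ x y, x ∈ T.leaves → y ∈ T.leaves → x ≠ y → w x y = W (lcaSubtree T x y))

/-! ### Ultrametrics and ground-truth inputs -/

/-- `d` is an ultrametric on `V`. -/
def IsUltrametric (d : V → V → ℝ) : Prop :=
  (∀ x, d x x = 0) ∧ (∀ x y, d x y = 0 → x = y) ∧ (∀ x y, d x y = d y x) ∧
  (∀ x y, 0 ≤ d x y) ∧ (∀ x y z, d x y ≤ max (d x z) (d y z))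

/-- `w` is a similarity graph generated from an ultrametric via a
non-increasing nonnegative function `f`. -/
def GeneratedFromUltrametric (w : V → V → ℝ) : Prop :=
  ∃ (d : V → V → ℝ) (f : ℝ → ℝ),
    IsUltrametric d ∧
    (∀ a b : ℝ, 0 ≤ a → a ≤ b → f b ≤ f a) ∧
    (∀ a : ℝ, 0 ≤ a → 0 ≤ f a) ∧
    (∀ x y : V, x ≠ y → w x y = f (d x y))

/-- `w` is a dissimilarity graph generated from an ultrametric via a
non-decreasing nonnegative function `f`. -/
def GeneratedFromUltrametricDissim (w : V → V → ℝ) : Prop :=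
  ∃ (d : V → V → ℝ) (f : ℝ → ℝ),
    IsUltrametric d ∧
    (∀ a b : ℝ, 0 ≤ a → a ≤ b → f a ≤ f b) ∧
    (∀ a : ℝ, 0 ≤ a → 0 ≤ f a) ∧
    (∀ x y : V, x ≠ y → w x y = f (d x y))

/-- `w` is a similarity graph generated from a *minimal* ultrametric:
pairs with equal weights are at equal ultrametric distance. -/
def GeneratedFromMinimalUltrametric (w : V → V → ℝ) : Prop :=
  ∃ (d : V → V → ℝ) (f : ℝ → ℝ),
    IsUltrametric d ∧
    (∀ a b : ℝ, 0 ≤ a → a ≤ b → f b ≤ f a) ∧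
    (∀ a : ℝ, 0 ≤ a → 0 ≤ f a) ∧
    (∀ x y : V, x ≠ y → w x y = f (d x y)) ∧
    (∀ u v u' v' : V, u ≠ v → u' ≠ v' → f (d u v) = f (d u' v') → d u v = d u' v')

/-- Dissimilarity analogue of `GeneratedFromMinimalUltrametric`. -/
def GeneratedFromMinimalUltrametricDissim (w : V → V → ℝ) : Prop :=
  ∃ (d : V → V → ℝ) (f : ℝ → ℝ),
    IsUltrametric d ∧
    (∀ a b : ℝ, 0 ≤ a → a ≤ b → f a ≤ f b) ∧
    (∀ a : ℝ, 0 ≤ a → 0 ≤ f a) ∧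
    (∀ x y : V, x ≠ y → w x y = f (d x y)) ∧
    (∀ u v u' v' : V, u ≠ v → u' ≠ v' → f (d u v) = f (d u' v') → d u v = d u' v')

/-- `w` is a `δ`-adversarially-perturbed (similarity) ground-truth input. -/
def IsDeltaPerturbedGroundTruth (w : V → V → ℝ) (δ : ℝ) : Prop :=
  ∃ (d : V → V → ℝ) (f : ℝ → ℝ),
    IsUltrametric d ∧
    (∀ a b : ℝ, 0 ≤ a → a ≤ b → f b ≤ f a) ∧
    (∀ a : ℝ, 0 ≤ a → 0 ≤ f a) ∧
    (∀ x y : V, x ≠ y → f (d x y) ≤ w x y ∧ w x y ≤ δ * f (d x y))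

end Defs

/-- The unit-weight clique on `V`. -/
def cliqueW (V : Type) [DecidableEq V] : V → V → ℝ := fun x y => if x = y then 0 else 1

/-- Admissibility of a cost function (similarity setting): on every similarity graph
generated from a minimal ultrametric, a cluster tree minimizes the cost
iff it is a generating tree. -/
def Admissible (g : ℕ → ℕ → ℝ) : Prop :=
  ∀ (V : Type) [Fintype V] [DecidableEq V] (w : V → V → ℝ),
    GeneratedFromMinimalUltrametric w →
    ∀ T : ClusterTree V, IsClusterTree T →
      ((∀ T' : ClusterTree V, IsClusterTree T' → treeCost w g T ≤ treeCost w g T')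
        ↔ IsGenerating w T)

/-- Admissibility of a value function (dissimilarity setting): on every dissimilarity
graph generated from a minimal ultrametric, a cluster tree maximizes the value
iff it is a generating tree. -/
def AdmissibleDissim (g : ℕ → ℕ → ℝ) : Prop :=
  ∀ (V : Type) [Fintype V] [DecidableEq V] (w : V → V → ℝ),
    GeneratedFromMinimalUltrametricDissim w →
    ∀ T : ClusterTree V, IsClusterTree T →
      ((∀ T' : ClusterTree V, IsClusterTree T' → treeCost w g T' ≤ treeCost w g T)
        ↔ IsGeneratingDissim w T)

/-! ### Agglomerative (linkage) algorithms, modelled as a nondeterministic relation -/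

/-- The initial state of an agglomerative algorithm: all singleton trees. -/
def initState (V : Type) [Fintype V] : Multiset (ClusterTree V) :=
  Finset.univ.val.map ClusterTree.leaf

/-- One merge step of a generic linkage algorithm: merge two candidate trees whose
leaf-set distance `D` is best (w.r.t. `better a b` = "`a` is at least as good as `b`")
among all candidate pairs; any tie-breaking choice is allowed. -/
inductive MergeStep {V : Type} [DecidableEq V] (D : Finset V → Finset V → ℝ)
    (better : ℝ → ℝ → Prop) :
    Multiset (ClusterTree V) → Multiset (ClusterTree V) → Prop where
  | step : ∀ (rest : Multiset (ClusterTree V)) (T1 T2 : ClusterTree V),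
      (∀ (T1' T2' : ClusterTree V) (rest' : Multiset (ClusterTree V)),
          T1 ::ₘ T2 ::ₘ rest = T1' ::ₘ T2' ::ₘ rest' →
          better (D T1.leaves T2.leaves) (D T1'.leaves T2'.leaves)) →
      MergeStep D better (T1 ::ₘ T2 ::ₘ rest) (ClusterTree.node T1 T2 ::ₘ rest)

/-- `T` is a possible output of the linkage algorithm with dissimilarity/similarity
measure `D` and preference `better`. -/
def IsLinkageOutput {V : Type} [Fintype V] [DecidableEq V]
    (D : Finset V → Finset V → ℝ) (better : ℝ → ℝ → Prop) (T : ClusterTree V) : Prop :=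
  Relation.ReflTransGen (MergeStep D better) (initState V) {T}

/-- Average-linkage measure. -/
def avgDist {V : Type} (w : V → V → ℝ) (A B : Finset V) : ℝ :=
  cutWeight w A B / ((A.card : ℝ) * (B.card : ℝ))

/-- Single-linkage measure: `min_{x ∈ A, y ∈ B} w x y`. -/
def minLinkDist {V : Type} [DecidableEq V] (w : V → V → ℝ) (A B : Finset V) : ℝ :=
  WithTop.untopD 0 (((A ×ˢ B).image fun p => w p.1 p.2).min)

/-- Complete-linkage measure: `max_{x ∈ A, y ∈ B} w x y`. -/
def maxLinkDist {V : Type} [DecidableEq V] (w : V → V → ℝ) (A B : Finset V) : ℝ :=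
  WithBot.unbotD 0 (((A ×ˢ B).image fun p => w p.1 p.2).max)

/-! ### Cuts -/

section Cuts

variable {V : Type}

/-- `A ⊕ x` : add `x` to `A` if absent, remove it if present. -/
def symmDiffV [DecidableEq V] (A : Finset V) (x : V) : Finset V :=
  if x ∈ A then A.erase x else insert x A

/-- `(A, B)` is an `ε/|A ∪ B|`-locally-densest cut of the induced subgraph on `A ∪ B`. -/
def IsLocallyDensestCut [DecidableEq V] (w : V → V → ℝ) (ε : ℝ) (A B : Finset V) : Prop :=
  ∀ x ∈ A ∪ B,
    cutWeight w (symmDiffV A x) (symmDiffV B x) /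
        (((symmDiffV A x).card : ℝ) * ((symmDiffV B x).card : ℝ)) ≤
      (1 + ε / ((A ∪ B).card : ℝ)) *
        (cutWeight w A B / ((A.card : ℝ) * (B.card : ℝ)))

/-- Cluster trees obtained by recursively splitting along `ε/n`-locally-densest cuts. -/
def IsRecLocallyDensestCutTree [DecidableEq V] (w : V → V → ℝ) (ε : ℝ) :
    ClusterTree V → Prop
  | ClusterTree.leaf _ => True
  | ClusterTree.node L R =>
      IsLocallyDensestCut w ε L.leaves R.leaves ∧
      IsRecLocallyDensestCutTree w ε L ∧ IsRecLocallyDensestCutTree w ε R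

/-- Cluster trees obtained by recursively splitting along `φ`-approximate sparsest cuts. -/
def IsRecApproxSparsestCutTree [DecidableEq V] (w : V → V → ℝ) (φ : ℝ) :
    ClusterTree V → Prop
  | ClusterTree.leaf _ => True
  | ClusterTree.node L R =>
      (∀ S : Finset V, S ⊆ L.leaves ∪ R.leaves → S.Nonempty → S ⊂ L.leaves ∪ R.leaves →
        cutWeight w L.leaves R.leaves / ((L.leaves.card : ℝ) * (R.leaves.card : ℝ)) ≤
          φ * (cutWeight w S ((L.leaves ∪ R.leaves) \ S) /
            ((S.card : ℝ) * (((L.leaves ∪ R.leaves) \ S).card : ℝ)))) ∧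
      IsRecApproxSparsestCutTree w φ L ∧ IsRecApproxSparsestCutTree w φ R

/-- Cluster trees obtained by recursively splitting along exact sparsest cuts. -/
def IsRecSparsestCutTree [DecidableEq V] (w : V → V → ℝ) : ClusterTree V → Prop
  | ClusterTree.leaf _ => True
  | ClusterTree.node L R =>
      (∀ S : Finset V, S ⊆ L.leaves ∪ R.leaves → S.Nonempty → S ⊂ L.leaves ∪ R.leaves →
        cutWeight w L.leaves R.leaves / ((L.leaves.card : ℝ) * (R.leaves.card : ℝ)) ≤
          cutWeight w S ((L.leaves ∪ R.leaves) \ S) /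
            ((S.card : ℝ) * (((L.leaves ∪ R.leaves) \ S).card : ℝ))) ∧
      IsRecSparsestCutTree w L ∧ IsRecSparsestCutTree w R

/-- Cluster trees obtained by recursively splitting along exact densest cuts. -/
def IsRecDensestCutTree [DecidableEq V] (w : V → V → ℝ) : ClusterTree V → Prop
  | ClusterTree.leaf _ => True
  | ClusterTree.node L R =>
      (∀ S : Finset V, S ⊆ L.leaves ∪ R.leaves → S.Nonempty → S ⊂ L.leaves ∪ R.leaves →
        cutWeight w S ((L.leaves ∪ R.leaves) \ S) /
            ((S.card : ℝ) * (((L.leaves ∪ R.leaves) \ S).card : ℝ)) ≤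
          cutWeight w L.leaves R.leaves / ((L.leaves.card : ℝ) * (R.leaves.card : ℝ))) ∧
      IsRecDensestCutTree w L ∧ IsRecDensestCutTree w R

/-- Cluster trees produced by the bisection 2-Center algorithm (similarity setting). -/
def IsBisection2CenterTree [DecidableEq V] (w : V → V → ℝ) : ClusterTree V → Prop
  | ClusterTree.leaf _ => True
  | ClusterTree.node L R =>
      (∃ u ∈ L.leaves ∪ R.leaves, ∃ v ∈ L.leaves ∪ R.leaves, u ≠ v ∧
        (∃ r : ℝ,
          (∀ x ∈ L.leaves ∪ R.leaves, r ≤ max (w x u) (w x v)) ∧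
          (∀ u' ∈ L.leaves ∪ R.leaves, ∀ v' ∈ L.leaves ∪ R.leaves, u' ≠ v' →
            ∃ x ∈ L.leaves ∪ R.leaves, max (w x u') (w x v') ≤ r)) ∧
        L.leaves = (L.leaves ∪ R.leaves).filter fun x => w x v ≤ w x u) ∧
      IsBisection2CenterTree w L ∧ IsBisection2CenterTree w R

/-- Cluster trees produced by the bisection 2-Center algorithm (dissimilarity setting). -/
def IsBisection2CenterTreeDissim [DecidableEq V] (w : V → V → ℝ) : ClusterTree V → Prop
  | ClusterTree.leaf _ => True
  | ClusterTree.node L R =>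
      (∃ u ∈ L.leaves ∪ R.leaves, ∃ v ∈ L.leaves ∪ R.leaves, u ≠ v ∧
        (∃ r : ℝ,
          (∀ x ∈ L.leaves ∪ R.leaves, min (w x u) (w x v) ≤ r) ∧
          (∀ u' ∈ L.leaves ∪ R.leaves, ∀ v' ∈ L.leaves ∪ R.leaves, u' ≠ v' →
            ∃ x ∈ L.leaves ∪ R.leaves, r ≤ min (w x u') (w x v'))) ∧
        L.leaves = (L.leaves ∪ R.leaves).filter fun x => w x u ≤ w x v) ∧
      IsBisection2CenterTreeDissim w L ∧ IsBisection2CenterTreeDissim w R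

end Cuts

/-! ### Pivot algorithms -/

mutual
/-- Trees produced by the fast pivot algorithm (Algorithm 6 of CKMM):
pick a pivot `p`, split the other vertices into classes of equal similarity to `p`
(in strictly decreasing order of similarity), recurse, and attach along a spine. -/
inductive IsPivotTree {V : Type} [DecidableEq V] (w : V → V → ℝ) : ClusterTree V → Prop where
  | mk : ∀ (p : V) (T : ClusterTree V), PivotSpine w p T → IsPivotTree w T

/-- The spine of the pivot algorithm: `PivotSpine w p T` says that `T` is an iterated
union of the single-vertex tree on `p` with pivot trees of the similarity classes of
`p`, attached in strictly decreasing order of similarity to `p`. -/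
inductive PivotSpine {V : Type} [DecidableEq V] (w : V → V → ℝ) : V → ClusterTree V → Prop where
  | base : ∀ p : V, PivotSpine w p (ClusterTree.leaf p)
  | step : ∀ (p : V) (S T : ClusterTree V) (c : ℝ),
      PivotSpine w p S → IsPivotTree w T →
      (∀ v ∈ T.leaves, w p v = c) →
      (∀ u ∈ S.leaves, u ≠ p → c < w p u) →
      PivotSpine w p (ClusterTree.node S T)
end

mutual
/-- Trees produced by the robust pivot algorithm (Algorithm 7 of CKMM). -/
inductive IsRobustPivotTree {V : Type} [DecidableEq V] (w : V → V → ℝ) :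
    ClusterTree V → Prop where
  | mk : ∀ (p : V) (T : ClusterTree V), RobustPivotSpine w T.leaves p T →
      IsRobustPivotTree w T

/-- `RobustPivotSpine w U p T` : `T` is a prefix (a spine) of a run of the robust pivot
algorithm on the vertex set `U`, started at the pivot `p`.  At each step, `wi` is the
maximum weight of an edge in the cut `(Ṽ, U \ Ṽ)` (where `Ṽ` is the set of already
clustered vertices), and the next block is the least subset of `U \ Ṽ` closed under
adding any vertex having an edge of weight at least `wi` into the block or into `Ṽ`. -/
inductive RobustPivotSpine {V : Type} [DecidableEq V] (w : V → V → ℝ) :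
    Finset V → V → ClusterTree V → Prop where
  | base : ∀ (U : Finset V) (p : V), RobustPivotSpine w U p (ClusterTree.leaf p)
  | step : ∀ (U : Finset V) (p : V) (S T : ClusterTree V) (wi : ℝ),
      RobustPivotSpine w U p S →
      IsRobustPivotTree w T →
      (∃ p1 ∈ S.leaves, ∃ p2 ∈ U \ S.leaves, w p1 p2 = wi) →
      (∀ q1 ∈ S.leaves, ∀ q2 ∈ U \ S.leaves, w q1 q2 ≤ wi) →
      T.leaves ⊆ U \ S.leaves →
      (∀ u ∈ U \ S.leaves, (∃ v ∈ T.leaves ∪ S.leaves, wi ≤ w u v) → u ∈ T.leaves) →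
      (∀ C : Finset V, C ⊆ U \ S.leaves →
        (∀ u ∈ U \ S.leaves, (∃ v ∈ C ∪ S.leaves, wi ≤ w u v) → u ∈ C) →
        T.leaves ⊆ C) →
      RobustPivotSpine w U p (ClusterTree.node S T)
end

/-! ### Paths and caterpillars -/

/-- Attach the leaves from the list `l` one by one on top of `t` (a "spine"). -/
def spineTree {V : Type} : ClusterTree V → List V → ClusterTree V
  | t, [] => t
  | t, v :: vs => spineTree (ClusterTree.node t (ClusterTree.leaf v)) vs

/-- The unit-weight path on `n` vertices. -/
def pathW (n : ℕ) (i j : Fin n) : ℝ :=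
  if (i : ℕ) + 1 = (j : ℕ) ∨ (j : ℕ) + 1 = (i : ℕ) then 1 else 0

/-! ### Random graphs: hierarchical stochastic block model -/

/-- Index set for the potential edges of a graph on `Fin n`. -/
abbrev EdgeIdx (n : ℕ) := {p : Fin n × Fin n // p.1 < p.2}

/-- The (0/1) weight function of the random graph described by the edge
configuration `c`. -/
def configW {n : ℕ} (c : EdgeIdx n → Bool) (u v : Fin n) : ℝ :=
  if h : u < v then (if c ⟨(u, v), h⟩ then 1 else 0)
  else if h' : v < u then (if c ⟨(v, u), h'⟩ then 1 else 0)
  else 0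

/-- The probability of the edge configuration `c` when each edge `e` is present
independently with probability `q e`. -/
def configProb {n : ℕ} (q : Fin n → Fin n → ℝ) (c : EdgeIdx n → Bool) : ℝ :=
  ∏ e : EdgeIdx n, if c e then q e.val.1 e.val.2 else 1 - q e.val.1 e.val.2

/-- The expected cost `E[Γ(T) | ψ]` of a fixed cluster tree `T`, over the random
choice of the edges (with edge probabilities `q`). -/
def expectedCost {n : ℕ} (g : ℕ → ℕ → ℝ) (q : Fin n → Fin n → ℝ)
    (T : ClusterTree (Fin n)) : ℝ :=
  ∑ c : EdgeIdx n → Bool, configProb q c * treeCost (configW c) g T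

/-- The (fixed, size-independent) data of a hierarchical stochastic block model with
`k` bottom-level clusters: a generating tree `Ttil` with weights `Wtil` in `(0,1)`
(the graph `G̃ₖ` on `k` vertices generated from an ultrametric), and intra-cluster
probabilities `p i ∈ (0,1]` exceeding the weight of the parent of leaf `i`. -/
structure HSBM (k : ℕ) where
  Ttil : ClusterTree (Fin k)
  Wtil : ClusterTree (Fin k) → ℝ
  p : Fin k → ℝ
  ttil_isClusterTree : IsClusterTree Ttil
  wtil_pos : ∀ L R, IsSubtreeOf (ClusterTree.node L R) Ttil →
    0 < Wtil (ClusterTree.node L R)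
  wtil_lt_one : ∀ L R, IsSubtreeOf (ClusterTree.node L R) Ttil →
    Wtil (ClusterTree.node L R) < 1
  wtil_mono : ∀ L R, IsSubtreeOf (ClusterTree.node L R) Ttil →
    ∀ s, IsSubtreeOf s L ∨ IsSubtreeOf s R → Wtil (ClusterTree.node L R) ≤ Wtil s
  p_pos : ∀ i, 0 < p i
  p_le_one : ∀ i, p i ≤ 1
  p_gt_parent : ∀ L R, IsSubtreeOf (ClusterTree.node L R) Ttil →
    ∀ i : Fin k, L = ClusterTree.leaf i ∨ R = ClusterTree.leaf i →
      Wtil (ClusterTree.node L R) < p i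

/-- The edge probabilities of the HSBM `M` with sparsity `α`, given the assignment
`ψ` of vertices to bottom-level clusters.  These are also the edge weights of the
expected graph `Ḡ`. -/
def HSBM.edgeProb {k : ℕ} (M : HSBM k) (α : ℝ) {n : ℕ} (ψ : Fin n → Fin k) :
    Fin n → Fin n → ℝ := fun u v =>
  if ψ u = ψ v then α * M.p (ψ u)
  else α * M.Wtil (lcaSubtree M.Ttil (ψ u) (ψ v))

/-- The probability of the sample `ω = (ψ, c)` (labels and edges) of the HSBM `M`
with label proportions `f` and sparsity `α`. -/
def hsbmProb {k : ℕ} (M : HSBM k) (f : Fin k → ℝ) (α : ℝ) {n : ℕ}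
    (ω : (Fin n → Fin k) × (EdgeIdx n → Bool)) : ℝ :=
  (∏ v : Fin n, f (ω.1 v)) * configProb (M.edgeProb α ω.1) ω.2

/-- The common cost `κ(n)` of all cluster trees of the unit-weight clique on `n`
vertices (computed on the caterpillar tree). -/
def cliqueTreeCost (g : ℕ → ℕ → ℝ) (n : ℕ) : ℝ :=
  ∑ i ∈ Finset.range n, (i : ℝ) * g i 1

/-- The smoothness property: `max {g(n₁,n₂) : n₁+n₂ = n} = O(κ(n)/n²)`. -/
def SmoothCost (g : ℕ → ℕ → ℝ) : Prop :=
  ∃ C : ℝ, 0 < C ∧ ∀ n1 n2 : ℕ, 1 ≤ n1 → 1 ≤ n2 →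
    g n1 n2 * (((n1 + n2 : ℕ) : ℝ)) ^ 2 ≤ C * cliqueTreeCost g (n1 + n2)

end

section PivotAux

open ClusterTree

variable {V : Type} [DecidableEq V]

lemma mem_leaves_node {L R : ClusterTree V} {x : V} :
    x ∈ (ClusterTree.node L R).leaves ↔ x ∈ L.leaves ∨ x ∈ R.leaves := by
  simp [ClusterTree.leaves, ClusterTree.leavesList]

lemma mem_leaves_leaf {v x : V} : x ∈ (ClusterTree.leaf v).leaves ↔ x = v := by
  simp [ClusterTree.leaves, ClusterTree.leavesList]

/-- The leftmost leaf of a tree. -/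
def headLeaf : ClusterTree V → V
  | .leaf v => v
  | .node L _ => headLeaf L

lemma headLeaf_mem (T : ClusterTree V) : headLeaf T ∈ T.leaves := by
  induction T with
  | leaf v => simp [headLeaf, mem_leaves_leaf]
  | node L R ihL ihR => exact mem_leaves_node.mpr (Or.inl ihL)

lemma sublist_of_subtree : ∀ {s T : ClusterTree V}, IsSubtreeOf s T →
    s.leavesList.Sublist T.leavesList := by
  intro s T
  induction T with
  | leaf v =>
    intro h
    simp only [IsSubtreeOf] at h
    subst h; exact List.Sublist.refl _
  | node L R ihL ihR =>
    intro h
    simp only [IsSubtreeOf] at h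
    rcases h with rfl | h | h
    · exact List.Sublist.refl _
    · exact (ihL h).trans (by simpa [ClusterTree.leavesList] using
        List.sublist_append_left L.leavesList R.leavesList)
    · exact (ihR h).trans (by simpa [ClusterTree.leavesList] using
        List.sublist_append_right L.leavesList R.leavesList)

lemma leaves_subset_of_subtree {s T : ClusterTree V} (h : IsSubtreeOf s T) :
    s.leaves ⊆ T.leaves := fun x hx => by
  simp only [ClusterTree.leaves, List.mem_toFinset] at hx ⊢
  exact (sublist_of_subtree h).subset hx

lemma nodup_of_subtree {s T : ClusterTree V} (h : IsSubtreeOf s T)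
    (hT : T.leavesList.Nodup) : s.leavesList.Nodup :=
  (sublist_of_subtree h).nodup hT

lemma subtree_refl (T : ClusterTree V) : IsSubtreeOf T T := by
  cases T with
  | leaf v => simp [IsSubtreeOf]
  | node L R => exact Or.inl rfl

lemma subtree_trans : ∀ {a b c : ClusterTree V},
    IsSubtreeOf a b → IsSubtreeOf b c → IsSubtreeOf a c := by
  intro a b c
  induction c with
  | leaf v =>
    intro hab hbc
    simp only [IsSubtreeOf] at hbc; subst hbc
    simpa [IsSubtreeOf] using hab
  | node L R ihL ihR =>
    intro hab hbc
    simp only [IsSubtreeOf] at hbc ⊢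
    rcases hbc with rfl | h | h
    · rcases hab with h' | h' | h'
      · exact Or.inl h'
      · exact Or.inr (Or.inl h')
      · exact Or.inr (Or.inr h')
    · exact Or.inr (Or.inl (ihL hab h))
    · exact Or.inr (Or.inr (ihR hab h))

lemma nodup_node_disjoint {L R : ClusterTree V}
    (h : (ClusterTree.node L R).leavesList.Nodup) :
    L.leavesList.Nodup ∧ R.leavesList.Nodup ∧
      ∀ x ∈ L.leaves, x ∉ R.leaves := by
  simp only [ClusterTree.leavesList, List.nodup_append] at h
  refine ⟨h.1, h.2.1, fun x hx hx' => ?_⟩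
  simp only [ClusterTree.leaves, List.mem_toFinset] at hx hx'
  exact h.2.2 x hx x hx' rfl

lemma lca_spec : ∀ (T : ClusterTree V) {x y : V}, x ∈ T.leaves → y ∈ T.leaves → x ≠ y →
    ∃ L R, lcaSubtree T x y = ClusterTree.node L R ∧
      IsSubtreeOf (ClusterTree.node L R) T ∧
      ((x ∈ L.leaves ∧ y ∈ R.leaves) ∨ (y ∈ L.leaves ∧ x ∈ R.leaves)) := by
  intro T
  induction T with
  | leaf v =>
    intro x y hx hy hxy
    rw [mem_leaves_leaf] at hx hy
    exact absurd (hx.trans hy.symm) hxy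
  | node L R ihL ihR =>
    intro x y hx hy hxy
    simp only [lcaSubtree]
    by_cases h1 : x ∈ L.leaves ∧ y ∈ L.leaves
    · rw [if_pos h1]
      obtain ⟨A, B, heq, hsub, hmem⟩ := ihL h1.1 h1.2 hxy
      exact ⟨A, B, heq, Or.inr (Or.inl hsub), hmem⟩
    · rw [if_neg h1]
      by_cases h2 : x ∈ R.leaves ∧ y ∈ R.leaves
      · rw [if_pos h2]
        obtain ⟨A, B, heq, hsub, hmem⟩ := ihR h2.1 h2.2 hxy
        exact ⟨A, B, heq, Or.inr (Or.inr hsub), hmem⟩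
      · rw [if_neg h2]
        refine ⟨L, R, rfl, subtree_refl _, ?_⟩
        rcases mem_leaves_node.mp hx with hxL | hxR
        · rcases mem_leaves_node.mp hy with hyL | hyR
          · exact absurd ⟨hxL, hyL⟩ h1
          · exact Or.inl ⟨hxL, hyR⟩
        · rcases mem_leaves_node.mp hy with hyL | hyR
          · exact Or.inr ⟨hyL, hxR⟩
          · exact absurd ⟨hxR, hyR⟩ h2

lemma pivotSpine_mem {w : V → V → ℝ} :
    ∀ {S : ClusterTree V} {p : V}, PivotSpine w p S → p ∈ S.leaves := by
  intro S
  induction S with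
  | leaf v =>
    intro p h
    cases h
    exact mem_leaves_leaf.mpr rfl
  | node S T ihS ihT =>
    intro p h
    cases h with
    | step _ _ _ c hS hT hc hlt => exact mem_leaves_node.mpr (Or.inl (ihS hS))

/-- The weight function used to witness `IsGenerating` for pivot trees. -/
def nodeW (w : V → V → ℝ) (M : ℝ) : ClusterTree V → ℝ
  | .leaf _ => M
  | .node L R => w (headLeaf L) (headLeaf R)

lemma pivot_crossEq {w : V → V → ℝ}
    (hkey : ∀ p u v : V, u ≠ p → v ≠ p → w p v < w p u → w u v = w p v) :
    ∀ {T : ClusterTree V}, IsPivotTree w T → T.leavesList.Nodup →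
      ∀ L R, IsSubtreeOf (ClusterTree.node L R) T →
        ∀ x ∈ L.leaves, ∀ y ∈ R.leaves, w x y = w (headLeaf L) (headLeaf R) := by
  intro T
  induction T with
  | leaf v =>
    intro _ _ L R hsub
    simp [IsSubtreeOf] at hsub
  | node S B ihS ihB =>
    intro hPT hnd L R hsub
    cases hPT with
    | mk p _ hsp =>
    cases hsp with
    | step _ _ _ c hS hB hc hlt =>
      obtain ⟨hndS, hndB, hdisj⟩ := nodup_node_disjoint hnd
      have hpS : p ∈ S.leaves := pivotSpine_mem hS
      have hcross : ∀ x ∈ S.leaves, ∀ y ∈ B.leaves, w x y = c := by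
        intro x hx y hy
        have hyp : y ≠ p := fun h => hdisj p hpS (h ▸ hy)
        by_cases hxp : x = p
        · subst hxp; exact hc y hy
        · have h1 : w p y = c := hc y hy
          have h2 : c < w p x := hlt x hx hxp
          have := hkey p x y hxp hyp (by rw [h1]; exact h2)
          rw [this, h1]
      simp only [IsSubtreeOf] at hsub
      rcases hsub with heq | hsub | hsub
      · obtain ⟨rfl, rfl⟩ : L = S ∧ R = B := by
          injection heq with h1 h2; exact ⟨h1, h2⟩
        intro x hx y hy
        rw [hcross x hx y hy, hcross _ (headLeaf_mem L) _ (headLeaf_mem R)]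
      · exact ihS (IsPivotTree.mk p _ hS) hndS L R hsub
      · exact ihB hB hndB L R hsub

end PivotAux

/-- Theorem 11, CKMM: the recursive pivot algorithm outputs a
generating tree on similarity ground-truth inputs (hence a tree of optimal cost for
every admissible objective function); moreover the key structural fact holds: if
`w(p,v) < w(p,u)` then `w(u,v) = w(p,v)`. -/
theorem statement14 {V : Type} [Fintype V] [DecidableEq V] (w : V → V → ℝ)
    (hgt : GeneratedFromUltrametric w) :
    (∀ p u v : V, u ≠ p → v ≠ p → w p v < w p u → w u v = w p v) ∧
    (∀ T : ClusterTree V, IsClusterTree T → IsPivotTree w T →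
      IsGenerating w T ∧
        ∀ g : ℕ → ℕ → ℝ, Admissible g →
          ∀ T' : ClusterTree V, IsClusterTree T' →
            treeCost w g T ≤ treeCost w g T') := by
  obtain ⟨d, f, ⟨hd0, hdsep, hdsymm, hdnn, hdult⟩, hfmono, hfnn, hwf⟩ := hgt
  have hsymm : ∀ x y : V, x ≠ y → w x y = w y x := by
    intro x y hxy
    rw [hwf x y hxy, hwf y x hxy.symm, hdsymm]
  have hwnn : ∀ x y : V, x ≠ y → 0 ≤ w x y := by
    intro x y hxy; rw [hwf x y hxy]; exact hfnn _ (hdnn x y)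
  have hmin : ∀ x y z : V, x ≠ y → x ≠ z → y ≠ z →
      min (w x z) (w y z) ≤ w x y := by
    intro x y z hxy hxz hyz
    rw [hwf x y hxy, hwf x z hxz, hwf y z hyz]
    rcases le_total (d x z) (d y z) with h | h
    · have h1 : d x y ≤ d y z := le_trans (hdult x y z) (max_le h le_rfl)
      exact le_trans (min_le_right _ _) (hfmono _ _ (hdnn x y) h1)
    · have h1 : d x y ≤ d x z := le_trans (hdult x y z) (max_le le_rfl h)
      exact le_trans (min_le_left _ _) (hfmono _ _ (hdnn x y) h1)
  have hkey : ∀ p u v : V, u ≠ p → v ≠ p → w p v < w p u → w u v = w p v := by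
    intro p u v hup hvp hlt
    have huv : u ≠ v := by rintro rfl; exact absurd hlt (lt_irrefl _)
    have h1 := hmin u v p huv hup hvp
    rw [hsymm u p hup, hsymm v p hvp, min_eq_right hlt.le] at h1
    have h2 := hmin p v u hvp.symm hup.symm huv.symm
    rw [hsymm v u huv.symm] at h2
    have hle : w u v ≤ w p v := by
      rcases le_total (w p u) (w u v) with h | h
      · rw [min_eq_left h] at h2; linarith
      · rw [min_eq_right h] at h2; linarith
    linarith
  set M : ℝ := ∑ x : V, ∑ y : V, |w x y| with hMdef
  have hM0 : (0:ℝ) ≤ M :=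
    Finset.sum_nonneg fun x _ => Finset.sum_nonneg fun y _ => abs_nonneg _
  have hMb : ∀ a b : V, w a b ≤ M := by
    intro a b
    have h1 : |w a b| ≤ ∑ y : V, |w a y| :=
      Finset.single_le_sum (f := fun y => |w a y|) (fun y _ => abs_nonneg _)
        (Finset.mem_univ b)
    have h2 : (∑ y : V, |w a y|) ≤ M :=
      Finset.single_le_sum (f := fun x => ∑ y : V, |w x y|)
        (fun x _ => Finset.sum_nonneg fun y _ => abs_nonneg _) (Finset.mem_univ a)
    exact le_trans (le_abs_self _) (le_trans h1 h2)
  set c : ℝ := M + 1 with hcdef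
  set d' : V → V → ℝ := fun x y => if x = y then 0 else c - w x y with hd'def
  have hd'pos : ∀ x y : V, x ≠ y → 0 < d' x y := by
    intro x y hxy
    have := hMb x y
    simp only [hd'def, if_neg hxy]
    simp only [hcdef]; linarith
  have hd'nn : ∀ x y : V, 0 ≤ d' x y := by
    intro x y
    by_cases h : x = y
    · simp [hd'def, h]
    · exact (hd'pos x y h).le
  have hd'symm : ∀ x y : V, d' x y = d' y x := by
    intro x y
    by_cases h : x = y
    · simp [hd'def, h]
    · simp only [hd'def, if_neg h, if_neg (Ne.symm h)]
      rw [hsymm x y h]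
  have hfd' : ∀ x y : V, x ≠ y → max (c - d' x y) 0 = w x y := by
    intro x y hxy
    simp only [hd'def, if_neg hxy]
    rw [show c - (c - w x y) = w x y by ring, max_eq_left (hwnn x y hxy)]
  have hGM : GeneratedFromMinimalUltrametric w := by
    refine ⟨d', fun a => max (c - a) 0, ⟨?_, ?_, ?_, hd'nn, ?_⟩, ?_, ?_, ?_, ?_⟩
    · intro x; simp [hd'def]
    · intro x y h
      by_contra hxy
      exact absurd h (ne_of_gt (hd'pos x y hxy))
    · exact hd'symm
    · intro x y z
      by_cases hxy : x = y
      · subst hxy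
        simp only [hd'def, if_pos rfl]
        exact le_max_of_le_left (hd'nn x z)
      by_cases hzx : z = x
      · rw [hzx, hd'symm x y]
        exact le_max_of_le_right le_rfl
      by_cases hzy : z = y
      · rw [hzy]
        exact le_max_of_le_left le_rfl
      · have hm := hmin x y z hxy (Ne.symm hzx) (Ne.symm hzy)
        simp only [hd'def, if_neg hxy, if_neg (Ne.symm hzx), if_neg (Ne.symm hzy)]
        rcases le_total (w x z) (w y z) with h | h
        · rw [min_eq_left h] at hm
          exact le_max_of_le_left (by linarith)
        · rw [min_eq_right h] at hm
          exact le_max_of_le_right (by linarith)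
    · intro a b _ hab
      exact max_le_max (by linarith) le_rfl
    · intro a _; exact le_max_right _ _
    · intro x y hxy; exact (hfd' x y hxy).symm
    · intro u v u' v' huv hu'v' h
      replace h : max (c - d' u v) 0 = max (c - d' u' v') 0 := h
      rw [hfd' u v huv, hfd' u' v' hu'v'] at h
      simp only [hd'def, if_neg huv, if_neg hu'v']
      linarith
  have hgenOf : ∀ T : ClusterTree V, IsClusterTree T → IsPivotTree w T →
      IsGenerating w T := by
    intro T hCT hPT
    have hnd : T.leavesList.Nodup := hCT.1
    have hcr := pivot_crossEq hkey hPT hnd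
    refine ⟨nodeW w M, ?_, ?_, ?_⟩
    · intro s hs
      cases s with
      | leaf v => simpa [nodeW] using hM0
      | node L R =>
        have hnds := nodup_of_subtree hs hnd
        obtain ⟨_, _, hdisj⟩ := nodup_node_disjoint hnds
        have hne : headLeaf L ≠ headLeaf R :=
          fun h => hdisj _ (headLeaf_mem L) (h ▸ headLeaf_mem R)
        simpa [nodeW] using hwnn _ _ hne
    · intro L R hsub s hs
      have hndLR := nodup_of_subtree hsub hnd
      obtain ⟨_, _, hdisj⟩ := nodup_node_disjoint hndLR
      have hW : ∀ x ∈ L.leaves, ∀ y ∈ R.leaves,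
          w x y = w (headLeaf L) (headLeaf R) := hcr L R hsub
      cases s with
      | leaf v => simpa [nodeW] using hMb (headLeaf L) (headLeaf R)
      | node L' R' =>
        have hsub' : IsSubtreeOf (ClusterTree.node L' R') (ClusterTree.node L R) := by
          rcases hs with h | h
          · exact Or.inr (Or.inl h)
          · exact Or.inr (Or.inr h)
        have hnds := nodup_of_subtree (subtree_trans hsub' hsub) hnd
        obtain ⟨_, _, hdisj'⟩ := nodup_node_disjoint hnds
        have hxy : headLeaf L' ≠ headLeaf R' :=
          fun h => hdisj' _ (headLeaf_mem L') (h ▸ headLeaf_mem R')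
        rcases hs with h | h
        · have hxL : headLeaf L' ∈ L.leaves := leaves_subset_of_subtree h
            (mem_leaves_node.mpr (Or.inl (headLeaf_mem L')))
          have hyL : headLeaf R' ∈ L.leaves := leaves_subset_of_subtree h
            (mem_leaves_node.mpr (Or.inr (headLeaf_mem R')))
          have hzR : headLeaf R ∈ R.leaves := headLeaf_mem R
          have hxz : headLeaf L' ≠ headLeaf R := fun hh => hdisj _ hxL (hh ▸ hzR)
          have hyz : headLeaf R' ≠ headLeaf R := fun hh => hdisj _ hyL (hh ▸ hzR)
          have h1 := hmin (headLeaf L') (headLeaf R') (headLeaf R) hxy hxz hyz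
          rw [hW _ hxL _ hzR, hW _ hyL _ hzR, min_self] at h1
          simpa [nodeW] using h1
        · have hxR : headLeaf L' ∈ R.leaves := leaves_subset_of_subtree h
            (mem_leaves_node.mpr (Or.inl (headLeaf_mem L')))
          have hyR : headLeaf R' ∈ R.leaves := leaves_subset_of_subtree h
            (mem_leaves_node.mpr (Or.inr (headLeaf_mem R')))
          have hzL : headLeaf L ∈ L.leaves := headLeaf_mem L
          have hzx : headLeaf L ≠ headLeaf L' := fun hh => hdisj _ hzL (hh ▸ hxR)
          have hzy : headLeaf L ≠ headLeaf R' := fun hh => hdisj _ hzL (hh ▸ hyR)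
          have h1 := hmin (headLeaf L') (headLeaf R') (headLeaf L) hxy
            (Ne.symm hzx) (Ne.symm hzy)
          have e1 : w (headLeaf L') (headLeaf L) = w (headLeaf L) (headLeaf R) := by
            rw [hsymm _ _ (Ne.symm hzx)]; exact hW _ hzL _ hxR
          have e2 : w (headLeaf R') (headLeaf L) = w (headLeaf L) (headLeaf R) := by
            rw [hsymm _ _ (Ne.symm hzy)]; exact hW _ hzL _ hyR
          rw [e1, e2, min_self] at h1
          simpa [nodeW] using h1
    · intro x y hx hy hxy
      obtain ⟨L, R, heq, hsub, hmem⟩ := lca_spec T hx hy hxy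
      rw [heq]
      rcases hmem with ⟨hxL, hyR⟩ | ⟨hyL, hxR⟩
      · simpa [nodeW] using hcr L R hsub x hxL y hyR
      · rw [hsymm x y hxy]
        simpa [nodeW] using hcr L R hsub y hyL x hxR
  refine ⟨hkey, ?_⟩
  intro T hCT hPT
  have hgen := hgenOf T hCT hPT
  refine ⟨hgen, ?_⟩
  intro g hadm T' hT'
  exact ((hadm V w hGM T hCT).mpr hgen) T' hT'
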